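/- arXiv:2411.14889 — 2 statements merged into one kernel-verified Lean document; each statement's English description precedes it below -/
import Mathlib

section
/- For every diamond-necklace N_k (k ≥ 2), σ_{(2,2)}(N_k) = σ_{(2,3)}(N_k) = k + 1. -/
open SimpleGraph Set

variable {V : Type*}

/-- One step of the (p,q)-spreading color change rule: a white vertex `w` with at least `p`
blue neighbors, at least one of which has at most `q` white neighbors, becomes blue. -/
def spreadStep (G : SimpleGraph V) (p : ℕ) (q : ℕ∞) (B : Set V) : Set V :=
  B ∪ {w | p ≤ (G.neighborSet w ∩ B).ncard ∧
      ∃ u ∈ G.neighborSet w ∩ B, ((G.neighborSet u \ B).ncard : ℕ∞) ≤ q}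

/-- `S` is a (p,q)-spreading set if iterating the rule eventually colors all vertices blue. -/
def IsSpreadingSet (G : SimpleGraph V) (p : ℕ) (q : ℕ∞) (S : Set V) : Prop :=
  ∃ n : ℕ, (spreadStep G p q)^[n] S = Set.univ

/-- The (p,q)-spreading number σ_{(p,q)}(G). -/
noncomputable def spreadNumber (G : SimpleGraph V) (p : ℕ) (q : ℕ∞) : ℕ :=
  sInf {k | ∃ S : Set V, S.ncard = k ∧ IsSpreadingSet G p q S}

/-- One step of r-neighbor bootstrap percolation. -/
def percStep (G : SimpleGraph V) (r : ℕ) (B : Set V) : Set V :=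
  B ∪ {w | r ≤ (G.neighborSet w ∩ B).ncard}

/-- `S` is an r-percolating set of `G`. -/
def IsPercolating (G : SimpleGraph V) (r : ℕ) (S : Set V) : Prop :=
  ∃ n : ℕ, (percStep G r)^[n] S = Set.univ

/-- The r-percolation number m(G,r). -/
noncomputable def percNumber (G : SimpleGraph V) (r : ℕ) : ℕ :=
  sInf {k | ∃ S : Set V, S.ncard = k ∧ IsPercolating G r S}

/-- A vertex cover of `G`. -/
def IsVertexCover (G : SimpleGraph V) (C : Set V) : Prop :=
  ∀ ⦃u v : V⦄, G.Adj u v → u ∈ C ∨ v ∈ C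

/-- The vertex cover number β(G). -/
noncomputable def coverNumber (G : SimpleGraph V) : ℕ :=
  sInf {k | ∃ C : Set V, C.ncard = k ∧ _root_.IsVertexCover G C}

/-- An independent set of `G`. -/
def IsIndep (G : SimpleGraph V) (I : Set V) : Prop :=
  I.Pairwise fun u v => ¬ G.Adj u v

/-- The independence number α(G). -/
noncomputable def indepNumber (G : SimpleGraph V) : ℕ :=
  sSup {k | ∃ I : Set V, I.ncard = k ∧ IsIndep G I}

/-- `G` has no induced `K_{1,3}`. -/
def ClawFree (G : SimpleGraph V) : Prop :=
  ¬ ∃ v a b c : V, a ≠ b ∧ a ≠ c ∧ b ≠ c ∧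
    G.Adj v a ∧ G.Adj v b ∧ G.Adj v c ∧ ¬ G.Adj a b ∧ ¬ G.Adj a c ∧ ¬ G.Adj b c

/-- The set `T` is (the vertex set of) a triangle of `G`. -/
def IsTriangle (G : SimpleGraph V) (T : Set V) : Prop :=
  ∃ a b c : V, a ≠ b ∧ a ≠ c ∧ b ≠ c ∧
    G.Adj a b ∧ G.Adj a c ∧ G.Adj b c ∧ T = {a, b, c}

/-- The set `D` induces a diamond (`K_4` minus the edge `ab`) in `G`. -/
def IsDiamond (G : SimpleGraph V) (D : Set V) : Prop :=
  ∃ a b c d : V, a ≠ b ∧ a ≠ c ∧ a ≠ d ∧ b ≠ c ∧ b ≠ d ∧ c ≠ d ∧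
    ¬ G.Adj a b ∧ G.Adj a c ∧ G.Adj a d ∧ G.Adj b c ∧ G.Adj b d ∧ G.Adj c d ∧
    D = {a, b, c, d}

/-- `P` is a partition of the vertex set of `G` into sets each inducing a triangle
or a diamond (a triangle-diamond partition). -/
def IsTDPartition (G : SimpleGraph V) (P : Set (Set V)) : Prop :=
  (∀ S ∈ P, IsTriangle G S ∨ IsDiamond G S) ∧ ∀ v : V, ∃! S : Set V, S ∈ P ∧ v ∈ S

/-- The diamond-necklace `N_k`: the vertex `(i, 0)` is `a_i`, `(i, 1)` is `b_i`,
`(i, 2)` is `c_i`, `(i, 3)` is `d_i`; inside each diamond all edges except `a_i b_i`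
are present, and consecutive diamonds are linked by the edges `a_i b_{i+1}`. -/
def diamondNecklace (k : ℕ) : SimpleGraph (ZMod k × Fin 4) :=
  SimpleGraph.fromRel (fun x y =>
    (x.1 = y.1 ∧ ¬ (x.2 = 0 ∧ y.2 = 1) ∧ ¬ (x.2 = 1 ∧ y.2 = 0))
    ∨ (y.1 = x.1 + 1 ∧ x.2 = 0 ∧ y.2 = 1))

/-- The triangle-necklace `F_{2k}`: the vertex `(j, 0)` is `x_{j+1}`, `(j, 1)` is `y_{j+1}`,
`(j, 2)` is `z_{j+1}`; each triple `{x,y,z}` with the same first coordinate is a triangle,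
and the triangles are linked by the edges `x_{2i-1}x_{2i}`, `y_{2i-1}y_{2i}` and
`z_{2i}z_{2i+1}` (indices modulo `2k`). -/
def triangleNecklace (k : ℕ) : SimpleGraph (ZMod (2 * k) × Fin 3) :=
  SimpleGraph.fromRel (fun x y =>
    (x.1 = y.1 ∧ x.2 ≠ y.2)
    ∨ (y.1 = x.1 + 1 ∧ Even x.1.val ∧ ((x.2 = 0 ∧ y.2 = 0) ∨ (x.2 = 1 ∧ y.2 = 1)))
    ∨ (y.1 = x.1 + 1 ∧ Odd x.1.val ∧ x.2 = 2 ∧ y.2 = 2))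

section Machinery

lemma subset_spreadStep (G : SimpleGraph V) (p q) (B : Set V) : B ⊆ spreadStep G p q B :=
  Set.subset_union_left

lemma spreadStep_subset_percStep (G : SimpleGraph V) (p q) (B : Set V) :
    spreadStep G p q B ⊆ percStep G p B :=
  Set.union_subset_union_right _ (fun _ h => h.1)

lemma spreadStep_mono_q (G : SimpleGraph V) (p) {q q' : ℕ∞} (h : q ≤ q') (B : Set V) :
    spreadStep G p q B ⊆ spreadStep G p q' B :=
  Set.union_subset_union_right _ (fun _ hw => ⟨hw.1, hw.2.imp fun u hu => ⟨hu.1, hu.2.trans h⟩⟩)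

lemma percStep_mono [Finite V] (G : SimpleGraph V) (r) : Monotone (percStep G r) := by
  intro B C hBC
  apply Set.union_subset_union hBC
  intro w hw
  exact le_trans hw (Set.ncard_le_ncard (Set.inter_subset_inter_right _ hBC) (Set.toFinite _))

lemma spreadStep_mono [Finite V] (G : SimpleGraph V) (p q) : Monotone (spreadStep G p q) := by
  intro B C hBC
  apply Set.union_subset_union hBC
  rintro w ⟨h1, u, hu, h2⟩
  refine ⟨le_trans h1 (Set.ncard_le_ncard (Set.inter_subset_inter_right _ hBC) (Set.toFinite _)),
    u, ⟨hu.1, hBC hu.2⟩, le_trans ?_ h2⟩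
  exact_mod_cast Set.ncard_le_ncard (Set.diff_subset_diff_right hBC) (Set.toFinite _)

lemma iterate_subset_iterate [Finite V] {f g : Set V → Set V} (hg : Monotone g)
    (hfg : ∀ B, f B ⊆ g B) (S : Set V) : ∀ n, f^[n] S ⊆ g^[n] S := by
  intro n
  induction n with
  | zero => exact subset_rfl
  | succ n ih =>
    rw [Function.iterate_succ_apply', Function.iterate_succ_apply']
    exact (hfg _).trans (hg ih)

lemma IsSpreadingSet.mono_q [Finite V] {G : SimpleGraph V} {p} {q q' : ℕ∞} (h : q ≤ q')
    {S : Set V} (hS : IsSpreadingSet G p q S) : IsSpreadingSet G p q' S := by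
  obtain ⟨n, hn⟩ := hS
  exact ⟨n, Set.eq_univ_of_univ_subset (hn ▸ iterate_subset_iterate (spreadStep_mono G p q')
    (spreadStep_mono_q G p h) S n)⟩

lemma IsSpreadingSet.isPercolating [Finite V] {G : SimpleGraph V} {p} {q : ℕ∞}
    {S : Set V} (hS : IsSpreadingSet G p q S) : IsPercolating G p S := by
  obtain ⟨n, hn⟩ := hS
  exact ⟨n, Set.eq_univ_of_univ_subset (hn ▸ iterate_subset_iterate (percStep_mono G p)
    (spreadStep_subset_percStep G p q) S n)⟩

lemma exists_iterate_eq_univ [Finite V] (f : Set V → Set V) (hf : ∀ B, B ⊆ f B) (S : Set V)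
    (h : ∀ B : Set V, S ⊆ B → f B = B → B = Set.univ) : ∃ n, f^[n] S = Set.univ := by
  have hstab : ∃ n, f^[n + 1] S = f^[n] S := by
    by_contra hno
    push_neg at hno
    have key : ∀ n, n ≤ (f^[n] S).ncard := by
      intro n
      induction n with
      | zero => exact Nat.zero_le _
      | succ n ih =>
        have : f^[n] S ⊂ f^[n + 1] S := by
          rw [Function.iterate_succ_apply']
          refine ssubset_of_subset_of_ne (hf _) fun heq => hno n ?_
          rw [Function.iterate_succ_apply']
          exact heq.symm
        have := Set.ncard_lt_ncard this (Set.toFinite _)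
        omega
    have := key (Nat.card V + 1)
    have h2 : (f^[Nat.card V + 1] S).ncard ≤ Nat.card V := by
      rw [← Set.ncard_univ (α := V)]
      exact Set.ncard_le_ncard (Set.subset_univ _) (Set.toFinite _)
    omega
  obtain ⟨n, hn⟩ := hstab
  have hSsub : ∀ m, S ⊆ f^[m] S := by
    intro m
    induction m with
    | zero => exact subset_rfl
    | succ m ih => rw [Function.iterate_succ_apply']; exact ih.trans (hf _)
  rw [Function.iterate_succ_apply'] at hn
  exact ⟨n, h _ (hSsub n) hn⟩

section Cut
open Classical in
/-- Number of (ordered) edges from `X` to `Y`. -/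
noncomputable def ecut (G : SimpleGraph V) [Fintype V] (X Y : Set V) : ℕ :=
  ∑ u : V, ∑ v : V, if u ∈ X ∧ v ∈ Y ∧ G.Adj u v then 1 else 0

variable [Fintype V] (G : SimpleGraph V)

open Classical in
lemma ncard_eq_sum (s : Set V) : s.ncard = ∑ v : V, if v ∈ s then 1 else 0 := by
  rw [Finset.sum_boole, Nat.cast_id]
  rw [← Set.ncard_coe_finset]
  congr 1
  ext v
  simp

open Classical in
lemma ecut_comm (X Y : Set V) : ecut G X Y = ecut G Y X := by
  unfold ecut
  rw [Finset.sum_comm]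
  refine Finset.sum_congr rfl fun u _ => Finset.sum_congr rfl fun v _ => ?_
  refine if_congr ?_ rfl rfl
  constructor
  · rintro ⟨h1, h2, h3⟩; exact ⟨h2, h1, h3.symm⟩
  · rintro ⟨h1, h2, h3⟩; exact ⟨h2, h1, h3.symm⟩

open Classical in
lemma ecut_eq_sum (X Y : Set V) :
    ecut G X Y = ∑ u : V, if u ∈ X then (G.neighborSet u ∩ Y).ncard else 0 := by
  unfold ecut
  refine Finset.sum_congr rfl fun u _ => ?_
  by_cases hu : u ∈ X
  · simp only [hu, true_and, if_true]
    rw [ncard_eq_sum]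
    refine Finset.sum_congr rfl fun v _ => ?_
    by_cases h1 : v ∈ Y <;> by_cases h2 : G.Adj u v <;>
      simp [h1, h2, Set.mem_inter_iff, SimpleGraph.mem_neighborSet]
  · simp [hu]

open Classical in
lemma ecut_union_right (X Y Z : Set V) (h : Disjoint Y Z) :
    ecut G X (Y ∪ Z) = ecut G X Y + ecut G X Z := by
  unfold ecut
  rw [← Finset.sum_add_distrib]
  refine Finset.sum_congr rfl fun u _ => ?_
  rw [← Finset.sum_add_distrib]
  refine Finset.sum_congr rfl fun v _ => ?_
  by_cases hY : v ∈ Y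
  · have hZ : v ∉ Z := fun hZ => (h.ne_of_mem hY hZ) rfl
    by_cases hX : u ∈ X <;> by_cases hA : G.Adj u v <;> simp [hX, hY, hZ, hA]
  · by_cases hZ : v ∈ Z <;> by_cases hX : u ∈ X <;> by_cases hA : G.Adj u v <;>
      simp [hX, hY, hZ, hA]

/-- The cut size of a blue set. -/
noncomputable def cutsz (B : Set V) : ℕ := ecut G B Bᶜ

lemma cutsz_le (hreg : ∀ v, (G.neighborSet v).ncard = 3) (B : Set V) :
    cutsz G B ≤ 3 * B.ncard := by
  classical
  rw [cutsz, ecut_eq_sum, ncard_eq_sum, Finset.mul_sum]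
  refine Finset.sum_le_sum fun u _ => ?_
  by_cases hu : u ∈ B
  · simp only [hu, if_true, mul_one]
    calc (G.neighborSet u ∩ Bᶜ).ncard ≤ (G.neighborSet u).ncard :=
          Set.ncard_le_ncard Set.inter_subset_left (Set.toFinite _)
      _ = 3 := hreg u
  · simp [hu]
end Cut

section CutStep
variable [Fintype V] (G : SimpleGraph V)

lemma deg_partition (hreg : ∀ v, (G.neighborSet v).ncard = 3) {A B C : Set V}
    (hAB : Disjoint A B) (hAC : Disjoint A C) (hBC : Disjoint B C)
    (hcover : A ∪ B ∪ C = Set.univ) (v : V) :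
    (G.neighborSet v ∩ A).ncard + (G.neighborSet v ∩ B).ncard
      + (G.neighborSet v ∩ C).ncard = 3 := by
  have h1 : G.neighborSet v ∩ A ∪ G.neighborSet v ∩ B ∪ G.neighborSet v ∩ C
      = G.neighborSet v := by
    rw [← Set.inter_union_distrib_left, ← Set.inter_union_distrib_left, hcover,
      Set.inter_univ]
  have d1 : Disjoint (G.neighborSet v ∩ A) (G.neighborSet v ∩ B) :=
    (hAB.mono Set.inter_subset_right Set.inter_subset_right)
  have d2 : Disjoint (G.neighborSet v ∩ A ∪ G.neighborSet v ∩ B) (G.neighborSet v ∩ C) :=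
    Disjoint.union_left (hAC.mono Set.inter_subset_right Set.inter_subset_right)
      (hBC.mono Set.inter_subset_right Set.inter_subset_right)
  rw [← hreg v]
  conv_rhs => rw [← h1]
  rw [Set.ncard_union_eq d2 (Set.toFinite _) (Set.toFinite _),
    Set.ncard_union_eq d1 (Set.toFinite _) (Set.toFinite _)]

lemma mem_percStep_cond {B : Set V} {n : V} (hn : n ∈ percStep G 2 B \ B) :
    2 ≤ (G.neighborSet n ∩ B).ncard := by
  rcases hn.1 with h | h
  · exact absurd h hn.2
  · exact h

lemma cut_step (hreg : ∀ v, (G.neighborSet v).ncard = 3) (B : Set V) :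
    cutsz G (percStep G 2 B) + (percStep G 2 B \ B).ncard ≤ cutsz G B := by
  classical
  set B' := percStep G 2 B with hB'
  have hBB' : B ⊆ B' := Set.subset_union_left
  set N := B' \ B with hN
  set W' := B'ᶜ with hW'
  have hdBN : Disjoint B N := Set.disjoint_sdiff_right
  have hdBW : Disjoint B W' := Set.disjoint_compl_right_iff_subset.mpr hBB'
  have hdNW : Disjoint N W' := (Set.disjoint_compl_right_iff_subset.mpr Set.diff_subset)
  have hBunion : B ∪ N = B' := by
    rw [hN, Set.union_diff_cancel hBB']
  have hcover : B ∪ N ∪ W' = Set.univ := by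
    rw [hBunion, hW', Set.union_compl_self]
  have hcompl : Bᶜ = N ∪ W' := by
    ext x
    simp only [Set.mem_compl_iff, Set.mem_union, hN, Set.mem_diff, hW', Set.mem_compl_iff]
    constructor
    · intro hx
      by_cases hx' : x ∈ B'
      · exact Or.inl ⟨hx', hx⟩
      · exact Or.inr hx'
    · rintro (⟨_, hx⟩ | hx)
      · exact hx
      · exact fun hB => hx (hBB' hB)
  have e1 : cutsz G B = ecut G B N + ecut G B W' := by
    rw [cutsz, hcompl, ecut_union_right G _ _ _ hdNW]
  have e2 : cutsz G B' = ecut G B W' + ecut G N W' := by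
    rw [cutsz, ← hW', ← hBunion, ecut_comm, ecut_union_right G _ _ _ hdBN,
      ecut_comm G W' B, ecut_comm G W' N]
  suffices h : ecut G N W' + N.ncard ≤ ecut G B N by omega
  rw [ecut_comm G B N, ecut_eq_sum, ecut_eq_sum, ncard_eq_sum, ← Finset.sum_add_distrib]
  refine Finset.sum_le_sum fun n _ => ?_
  by_cases hn : n ∈ N
  · simp only [hn, if_true]
    have h2 : 2 ≤ (G.neighborSet n ∩ B).ncard := mem_percStep_cond G hn
    have hpart := deg_partition G hreg hdBN (hdBW.mono_left le_rfl) hdNW hcover n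
    omega
  · simp [hn]

lemma cut_final (hreg : ∀ v, (G.neighborSet v).ncard = 3) (B : Set V)
    (hB : percStep G 2 B = Set.univ) (hne : B ≠ Set.univ) :
    Bᶜ.ncard + 2 ≤ cutsz G B := by
  classical
  have hNc : ∀ n ∈ Bᶜ, 2 ≤ (G.neighborSet n ∩ B).ncard := by
    intro n hn
    refine mem_percStep_cond G ⟨?_, hn⟩
    rw [hB]; trivial
  have hcut : cutsz G B = ∑ n : V, if n ∈ Bᶜ then (G.neighborSet n ∩ B).ncard else 0 := by
    rw [cutsz, ecut_comm, ecut_eq_sum]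
    refine Finset.sum_congr rfl fun u _ => ?_
    by_cases hu : u ∈ Bᶜ <;> simp [hu]
  rcases Nat.lt_or_ge Bᶜ.ncard 2 with hlt | hge
  · interval_cases h : Bᶜ.ncard
    · exact absurd (Set.compl_empty_iff.mp (Set.ncard_eq_zero (Set.toFinite _) |>.mp h)) hne
    · obtain ⟨n, hn⟩ := Set.ncard_eq_one.mp h
      have hnb : G.neighborSet n ∩ B = G.neighborSet n := by
        refine Set.inter_eq_left.mpr fun v hv => ?_
        by_contra hvB
        have : v ∈ Bᶜ := hvB
        rw [hn, Set.mem_singleton_iff] at this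
        exact G.ne_of_adj hv this.symm
      have : cutsz G B = 3 := by
        rw [hcut, Finset.sum_eq_single n]
        · simp [hn, hnb, hreg n]
        · intro m _ hm; simp [hn, hm]
        · intro hni; exact absurd (Finset.mem_univ n) hni
      omega
  · have : ∑ n : V, (if n ∈ Bᶜ then 2 else 0) ≤ cutsz G B := by
      rw [hcut]
      refine Finset.sum_le_sum fun n _ => ?_
      by_cases hn : n ∈ Bᶜ
      · simpa [hn] using hNc n hn
      · simp [hn]
    have h2 : ∑ n : V, (if n ∈ Bᶜ then 2 else 0) = 2 * Bᶜ.ncard := by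
      rw [ncard_eq_sum, Finset.mul_sum]
      refine Finset.sum_congr rfl fun n _ => ?_
      by_cases hn : n ∈ Bᶜ <;> simp [hn]
    omega

lemma perc_traj (hreg : ∀ v, (G.neighborSet v).ncard = 3) :
    ∀ (n : ℕ) (B : Set V), (percStep G 2)^[n] B = Set.univ → B ≠ Set.univ →
      Bᶜ.ncard + 2 ≤ cutsz G B := by
  intro n
  induction n with
  | zero => intro B h hne; exact absurd h hne
  | succ n ih =>
    intro B h hne
    rw [Function.iterate_succ_apply] at h
    by_cases hB' : percStep G 2 B = Set.univ
    · exact cut_final G hreg B hB' hne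
    · have h1 := ih _ h hB'
      have h2 := cut_step G hreg B
      have hBB' : B ⊆ percStep G 2 B := Set.subset_union_left
      have h3 : Bᶜ.ncard = (percStep G 2 B)ᶜ.ncard + (percStep G 2 B \ B).ncard := by
        have : Bᶜ = (percStep G 2 B)ᶜ ∪ (percStep G 2 B \ B) := by
          ext x
          simp only [Set.mem_compl_iff, Set.mem_union, Set.mem_diff]
          constructor
          · intro hx
            by_cases hx' : x ∈ percStep G 2 B
            · exact Or.inr ⟨hx', hx⟩
            · exact Or.inl hx'
          · rintro (hx | ⟨_, hx⟩)
            · exact fun hB => hx (hBB' hB)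
            · exact hx
        rw [this, Set.ncard_union_eq ?_ (Set.toFinite _) (Set.toFinite _)]
        exact (Set.disjoint_compl_left_iff_subset.mpr Set.diff_subset)
      omega

lemma perc_lower (hreg : ∀ v, (G.neighborSet v).ncard = 3) [Nonempty V] {S : Set V}
    (hS : IsPercolating G 2 S) : Fintype.card V + 2 ≤ 4 * S.ncard := by
  by_cases hu : S = Set.univ
  · have : S.ncard = Fintype.card V := by
      rw [hu, Set.ncard_univ, Nat.card_eq_fintype_card]
    have : 1 ≤ Fintype.card V := Fintype.card_pos
    omega
  · obtain ⟨n, hn⟩ := hS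
    have h1 := perc_traj G hreg n S hn hu
    have h2 := cutsz_le G hreg S
    have h3 : S.ncard + Sᶜ.ncard = Fintype.card V := by
      rw [Set.ncard_add_ncard_compl, Nat.card_eq_fintype_card]
    omega
end CutStep

end Machinery

section Necklace

variable {k : ℕ}

lemma dn_adj (x y : ZMod k × Fin 4) : (diamondNecklace k).Adj x y ↔ x ≠ y ∧
    ((x.1 = y.1 ∧ ¬ (x.2 = 0 ∧ y.2 = 1) ∧ ¬ (x.2 = 1 ∧ y.2 = 0))
    ∨ (y.1 = x.1 + 1 ∧ x.2 = 0 ∧ y.2 = 1)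
    ∨ (x.1 = y.1 + 1 ∧ y.2 = 0 ∧ x.2 = 1)) := by
  rw [diamondNecklace, SimpleGraph.fromRel_adj]
  constructor
  · rintro ⟨h1, (h | h) | (h | h)⟩
    · exact ⟨h1, Or.inl h⟩
    · exact ⟨h1, Or.inr (Or.inl h)⟩
    · exact ⟨h1, Or.inl ⟨h.1.symm, fun hc => h.2.2 ⟨hc.2, hc.1⟩, fun hc => h.2.1 ⟨hc.2, hc.1⟩⟩⟩
    · exact ⟨h1, Or.inr (Or.inr h)⟩
  · rintro ⟨h1, h | h | h⟩
    · exact ⟨h1, Or.inl (Or.inl h)⟩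
    · exact ⟨h1, Or.inl (Or.inr h)⟩
    · exact ⟨h1, Or.inr (Or.inr ⟨h.1, h.2.1, h.2.2⟩)⟩

lemma nbr_a (i : ZMod k) : (diamondNecklace k).neighborSet (i, 0) =
    {(i, 2), (i, 3), (i + 1, 1)} := by
  ext ⟨j, t⟩
  simp only [SimpleGraph.mem_neighborSet, dn_adj, Set.mem_insert_iff, Set.mem_singleton_iff,
    Prod.mk.injEq, ne_eq, Prod.ext_iff]
  fin_cases t <;> simp <;> aesop

lemma nbr_b (i : ZMod k) : (diamondNecklace k).neighborSet (i, 1) =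
    {(i, 2), (i, 3), (i - 1, 0)} := by
  ext ⟨j, t⟩
  simp only [SimpleGraph.mem_neighborSet, dn_adj, Set.mem_insert_iff, Set.mem_singleton_iff,
    Prod.mk.injEq, ne_eq, Prod.ext_iff]
  fin_cases t <;> simp <;> constructor <;> (rintro rfl; ring)

lemma nbr_c (i : ZMod k) : (diamondNecklace k).neighborSet (i, 2) =
    {(i, 0), (i, 1), (i, 3)} := by
  ext ⟨j, t⟩
  simp only [SimpleGraph.mem_neighborSet, dn_adj, Set.mem_insert_iff, Set.mem_singleton_iff,
    Prod.mk.injEq, ne_eq, Prod.ext_iff]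
  fin_cases t <;> simp <;> aesop

lemma nbr_d (i : ZMod k) : (diamondNecklace k).neighborSet (i, 3) =
    {(i, 0), (i, 1), (i, 2)} := by
  ext ⟨j, t⟩
  simp only [SimpleGraph.mem_neighborSet, dn_adj, Set.mem_insert_iff, Set.mem_singleton_iff,
    Prod.mk.injEq, ne_eq, Prod.ext_iff]
  fin_cases t <;> simp <;> aesop

lemma dn_reg (v : ZMod k × Fin 4) : ((diamondNecklace k).neighborSet v).ncard = 3 := by
  obtain ⟨i, t⟩ := v
  fin_cases t <;> simp only [show ((⟨0,by omega⟩ : Fin 4)) = 0 from rfl, show ((⟨1,by omega⟩ : Fin 4)) = 1 from rfl, show ((⟨2,by omega⟩ : Fin 4)) = 2 from rfl, show ((⟨3,by omega⟩ : Fin 4)) = 3 from rfl]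
  · rw [nbr_a]
    refine Set.ncard_eq_three.mpr ⟨_, _, _, ?_, ?_, ?_, rfl⟩ <;> simp [Prod.ext_iff]
  · rw [nbr_b]
    refine Set.ncard_eq_three.mpr ⟨_, _, _, ?_, ?_, ?_, rfl⟩ <;> simp [Prod.ext_iff]
  · rw [nbr_c]
    refine Set.ncard_eq_three.mpr ⟨_, _, _, ?_, ?_, ?_, rfl⟩ <;> simp [Prod.ext_iff]
  · rw [nbr_d]
    refine Set.ncard_eq_three.mpr ⟨_, _, _, ?_, ?_, ?_, rfl⟩ <;> simp [Prod.ext_iff]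

lemma closed_mem {V : Type*} [Finite V] {G : SimpleGraph V} {B : Set V}
    (hcl : B ∪ {w | 2 ≤ (G.neighborSet w ∩ B).ncard ∧
      ∃ u ∈ G.neighborSet w ∩ B, ((G.neighborSet u \ B).ncard : ℕ∞) ≤ 2} = B)
    {w u1 u2 : V} (h12 : u1 ≠ u2) (ha1 : u1 ∈ G.neighborSet w) (ha2 : u2 ∈ G.neighborSet w)
    (hb1 : u1 ∈ B) (hb2 : u2 ∈ B) {x y : V}
    (hsub : G.neighborSet u1 \ B ⊆ {x, y}) : w ∈ B := by
  rw [← hcl]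
  refine Or.inr ⟨?_, u1, ⟨ha1, hb1⟩, ?_⟩
  · calc (2 : ℕ) = ({u1, u2} : Set V).ncard := (Set.ncard_pair h12).symm
      _ ≤ (G.neighborSet w ∩ B).ncard := Set.ncard_le_ncard
          (by rintro z (rfl | rfl); exacts [⟨ha1, hb1⟩, ⟨ha2, hb2⟩]) (Set.toFinite _)
  · have h1 : (G.neighborSet u1 \ B).ncard ≤ 2 := by
      calc (G.neighborSet u1 \ B).ncard ≤ ({x, y} : Set V).ncard :=
            Set.ncard_le_ncard hsub (Set.toFinite _)
        _ ≤ 2 := by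
            calc ({x, y} : Set V).ncard ≤ ({y} : Set V).ncard + 1 := Set.ncard_insert_le x {y}
              _ = 2 := by rw [Set.ncard_singleton]
    exact_mod_cast h1

lemma dn_closure (hk : 2 ≤ k) (B : Set (ZMod k × Fin 4))
    (hcl : B ∪ {w | 2 ≤ ((diamondNecklace k).neighborSet w ∩ B).ncard ∧
      ∃ u ∈ (diamondNecklace k).neighborSet w ∩ B,
        (((diamondNecklace k).neighborSet u \ B).ncard : ℕ∞) ≤ 2} = B)
    (hc : ∀ i : ZMod k, (i, 2) ∈ B) (hd0 : ((0 : ZMod k), 3) ∈ B) : B = Set.univ := by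
  haveI : NeZero k := ⟨by omega⟩
  -- step: from d_i deduce a_i
  have step_a : ∀ i : ZMod k, (i, 3) ∈ B → (i, 0) ∈ B := by
    intro i hdi
    refine closed_mem hcl (u1 := (i, 2)) (u2 := (i, 3)) (by simp) ?_ ?_ (hc i) hdi
      (x := (i, 0)) (y := (i, 1)) ?_
    · rw [nbr_a]; simp
    · rw [nbr_a]; simp
    · rw [nbr_c]
      rintro ⟨j, t⟩ ⟨h1, h2⟩
      rcases h1 with h | h | h
      · exact Or.inl h
      · exact Or.inr h
      · exact absurd (h ▸ hdi) h2
  -- step: from a_i deduce b_{i+1}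
  have step_b : ∀ i : ZMod k, (i, 3) ∈ B → (i + 1, 1) ∈ B := by
    intro i hdi
    have hai := step_a i hdi
    refine closed_mem hcl (u1 := (i, 0)) (u2 := (i + 1, 2)) (by simp [Prod.ext_iff]) ?_ ?_
      hai (hc (i + 1)) (x := (i + 1, 1)) (y := (i + 1, 1)) ?_
    · rw [nbr_b]; simp [add_sub_cancel_right]
    · rw [nbr_b]; simp
    · rw [nbr_a]
      rintro ⟨j, t⟩ ⟨h1, h2⟩
      rcases h1 with h | h | h
      · exact absurd (h ▸ hc i) h2
      · exact absurd (h ▸ hdi) h2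
      · simp [h]
  -- step: from d_i deduce d_{i+1}
  have step_d : ∀ i : ZMod k, (i, 3) ∈ B → (i + 1, 3) ∈ B := by
    intro i hdi
    have hbi := step_b i hdi
    refine closed_mem hcl (u1 := (i + 1, 2)) (u2 := (i + 1, 1)) (by simp) ?_ ?_
      (hc (i + 1)) hbi (x := (i + 1, 0)) (y := (i + 1, 3)) ?_
    · rw [nbr_d]; simp
    · rw [nbr_d]; simp
    · rw [nbr_c]
      rintro ⟨j, t⟩ ⟨h1, h2⟩
      rcases h1 with h | h | h
      · exact Or.inl h
      · exact absurd (h ▸ hbi) h2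
      · exact Or.inr h
  have hcast : ∀ i : ZMod k, ((i.val : ℕ) : ZMod k) = i := fun i => by
    simp [ZMod.natCast_val]
  have hdall : ∀ i : ZMod k, (i, 3) ∈ B := by
    have hnat : ∀ j : ℕ, (((j : ℕ) : ZMod k), 3) ∈ B := by
      intro j
      induction j with
      | zero => exact_mod_cast hd0
      | succ j ih => push_cast; exact step_d _ ih
    intro i
    have := hnat i.val
    rwa [hcast i] at this
  have haall : ∀ i : ZMod k, (i, 0) ∈ B := fun i => step_a i (hdall i)
  have hball : ∀ i : ZMod k, (i, 1) ∈ B := by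
    intro i
    have := step_b (i - 1) (hdall (i - 1))
    rwa [sub_add_cancel] at this
  ext ⟨i, t⟩
  simp only [Set.mem_univ, iff_true]
  fin_cases t
  · exact haall i
  · exact hball i
  · exact hc i
  · exact hdall i

end Necklace

theorem stmt15 (k : ℕ) (hk : 2 ≤ k) :
    spreadNumber (diamondNecklace k) 2 2 = k + 1 ∧
    spreadNumber (diamondNecklace k) 2 3 = k + 1 := by
  haveI : NeZero k := ⟨by omega⟩
  set G := diamondNecklace k with hG
  set S₀ : Set (ZMod k × Fin 4) :=
    (fun i : ZMod k => ((i, 2) : ZMod k × Fin 4)) '' Set.univ ∪ {((0 : ZMod k), (3 : Fin 4))}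
    with hS₀
  have hmemS₀c : ∀ i : ZMod k, (i, (2 : Fin 4)) ∈ S₀ := fun i =>
    Or.inl ⟨i, Set.mem_univ i, rfl⟩
  have hmemS₀d : ((0 : ZMod k), (3 : Fin 4)) ∈ S₀ := Or.inr rfl
  have hcard : S₀.ncard = k + 1 := by
    rw [hS₀, Set.ncard_union_eq ?_ (Set.toFinite _) (Set.toFinite _)]
    · rw [Set.ncard_image_of_injective _ (fun a b h => by
        simpa [Prod.ext_iff] using h), Set.ncard_univ, Set.ncard_singleton,
        Nat.card_eq_fintype_card, ZMod.card]
    · rw [Set.disjoint_singleton_right]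
      rintro ⟨i, -, h⟩
      simp [Prod.ext_iff] at h
  have hspread : IsSpreadingSet G 2 2 S₀ := by
    apply exists_iterate_eq_univ (spreadStep G 2 2) (subset_spreadStep G 2 2) S₀
    intro B hSB hclB
    exact dn_closure hk B hclB (fun i => hSB (hmemS₀c i)) (hSB hmemS₀d)
  have hlow : ∀ (q : ℕ∞) (m : ℕ),
      m ∈ {m | ∃ S : Set (ZMod k × Fin 4), S.ncard = m ∧ IsSpreadingSet G 2 q S} →
      k + 1 ≤ m := by
    rintro q m ⟨S, rfl, hS⟩
    have hperc : IsPercolating G 2 S := hS.isPercolating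
    have := perc_lower G dn_reg hperc
    rw [Fintype.card_prod, ZMod.card, Fintype.card_fin] at this
    omega
  have key : ∀ q : ℕ∞, IsSpreadingSet G 2 q S₀ → spreadNumber G 2 q = k + 1 := by
    intro q hq
    have hmem : k + 1 ∈ {m | ∃ S : Set (ZMod k × Fin 4), S.ncard = m ∧ IsSpreadingSet G 2 q S} :=
      ⟨S₀, hcard, hq⟩
    exact le_antisymm (Nat.sInf_le hmem) (le_csInf ⟨k + 1, hmem⟩ (hlow q))
  exact ⟨key 2 hspread, key 3 (hspread.mono_q (by norm_num))⟩
end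

section
/- For every k ≥ 1, the triangle-necklace F_{2k} on n = 6k vertices satisfies α(F_{2k}) = 2k and m(F_{2k}, 3) = 4k. -/
open SimpleGraph Set

variable {V : Type*}

section Aux

variable {k : ℕ}

private lemma parity_flip (hk : 1 ≤ k) (j : ZMod (2*k)) :
    Even ((j+1).val) ↔ ¬ Even j.val := by
  haveI : NeZero (2*k) := ⟨by omega⟩
  haveI : Fact (1 < 2*k) := ⟨by omega⟩
  rw [ZMod.val_add, ZMod.val_one, Nat.even_iff,
    Nat.mod_mod_of_dvd _ ⟨k, rfl⟩, Nat.even_iff]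
  omega

private def Dir (j : ZMod (2*k)) (t : Fin 3) : Prop := Even j.val ↔ t ≠ 2

private instance (j : ZMod (2*k)) (t : Fin 3) : Decidable (Dir j t) := by
  unfold Dir; infer_instance

private lemma adj_iff (hk : 1 ≤ k) (j j' : ZMod (2*k)) (t t' : Fin 3) :
    (triangleNecklace k).Adj (j,t) (j',t') ↔
      (j = j' ∧ t ≠ t') ∨
      (t = t' ∧ ((j' = j+1 ∧ Dir j t) ∨ (j = j'+1 ∧ Dir j' t))) := by
  haveI : NeZero (2*k) := ⟨by omega⟩
  haveI : Fact (1 < 2*k) := ⟨by omega⟩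
  have hne : ∀ a : ZMod (2*k), a + 1 ≠ a := fun a h =>
    one_ne_zero (by rwa [add_eq_left] at h)
  rw [triangleNecklace, SimpleGraph.fromRel_adj]
  simp only [ne_eq, Prod.mk.injEq, not_and, Dir]
  constructor
  · rintro ⟨h0, h⟩
    rcases h with (⟨h1,h2⟩|⟨h1,h2,h3⟩|⟨h1,h2,h3,h4⟩)|(⟨h1,h2⟩|⟨h1,h2,h3⟩|⟨h1,h2,h3,h4⟩)
    · exact Or.inl ⟨h1, h2⟩
    · refine Or.inr ⟨?_, Or.inl ⟨h1, ?_⟩⟩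
      · rcases h3 with ⟨rfl,rfl⟩|⟨rfl,rfl⟩ <;> rfl
      · constructor
        · intro _; rcases h3 with ⟨rfl,_⟩|⟨rfl,_⟩ <;> decide
        · intro _; exact h2
    · subst h3 h4
      exact Or.inr ⟨rfl, Or.inl ⟨h1, by simp [Nat.even_iff, Nat.odd_iff] at h2 ⊢; omega⟩⟩
    · exact Or.inl ⟨h1.symm, fun h => h2 h.symm⟩
    · refine Or.inr ⟨?_, Or.inr ⟨h1, ?_⟩⟩
      · rcases h3 with ⟨rfl,rfl⟩|⟨rfl,rfl⟩ <;> rfl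
      · constructor
        · intro _; rcases h3 with ⟨_,rfl⟩|⟨_,rfl⟩ <;> decide
        · intro _; exact h2
    · subst h3 h4
      exact Or.inr ⟨rfl, Or.inr ⟨h1, by simp [Nat.even_iff, Nat.odd_iff] at h2 ⊢; omega⟩⟩
  · rintro (⟨rfl, h2⟩|⟨rfl, (⟨rfl, hd⟩|⟨rfl, hd⟩)⟩)
    · exact ⟨fun _ => h2, Or.inl (Or.inl ⟨rfl, h2⟩)⟩
    · refine ⟨fun h => absurd h.symm (hne j), Or.inl ?_⟩
      by_cases ht : t = 2
      · subst ht
        refine Or.inr (Or.inr ⟨rfl, ?_, rfl, rfl⟩)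
        rw [Nat.odd_iff]
        simp only [Nat.even_iff, not_true, iff_false] at hd
        omega
      · have he : Even j.val := hd.2 ht
        refine Or.inr (Or.inl ⟨rfl, he, ?_⟩)
        fin_cases t <;> simp_all
    · refine ⟨fun h => absurd h (hne j'), Or.inr ?_⟩
      by_cases ht : t = 2
      · subst ht
        refine Or.inr (Or.inr ⟨rfl, ?_, rfl, rfl⟩)
        rw [Nat.odd_iff]
        simp only [Nat.even_iff, not_true, iff_false] at hd
        omega
      · have he : Even j'.val := hd.2 ht
        refine Or.inr (Or.inl ⟨rfl, he, ?_⟩)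
        fin_cases t <;> simp_all

private lemma dir_flip (hk : 1 ≤ k) (j : ZMod (2*k)) (t : Fin 3) :
    Dir (j-1) t ↔ ¬ Dir j t := by
  have h := parity_flip hk (j-1)
  rw [sub_add_cancel] at h
  simp only [Dir, h]
  tauto

private lemma nbhd (hk : 1 ≤ k) (j : ZMod (2*k)) (t : Fin 3) :
    ∃ c : ZMod (2*k), c ≠ j ∧
      (triangleNecklace k).neighborSet (j,t) = {(j,t+1),(j,t+2),(c,t)} := by
  haveI : NeZero (2*k) := ⟨by omega⟩
  haveI : Fact (1 < 2*k) := ⟨by omega⟩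
  have hne1 : ∀ a : ZMod (2*k), a + 1 ≠ a := fun a h =>
    one_ne_zero (by rwa [add_eq_left] at h)
  have hne2 : ∀ a : ZMod (2*k), a - 1 ≠ a := fun a h =>
    one_ne_zero (sub_eq_self.mp h)
  have ht12 : ∀ t t' : Fin 3, t ≠ t' → t' = t + 1 ∨ t' = t + 2 := by decide
  have hts : ∀ t : Fin 3, t ≠ t + 1 ∧ t ≠ t + 2 := by decide
  refine ⟨if Dir j t then j+1 else j-1, ?_, ?_⟩
  · split
    · exact hne1 j
    · exact hne2 j
  · ext ⟨j', t'⟩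
    simp only [mem_neighborSet, adj_iff hk, Set.mem_insert_iff,
      Set.mem_singleton_iff, Prod.mk.injEq]
    constructor
    · rintro (⟨rfl, ht⟩ | ⟨rfl, (⟨rfl, hd⟩ | ⟨hj, hd⟩)⟩)
      · have := ht12 t t' ht
        tauto
      · rw [if_pos hd]; tauto
      · have hj' : j' = j - 1 := by rw [hj]; ring
        subst hj'
        rw [if_neg (fun hc => (dir_flip hk j t).mp hd hc)]
        tauto
    · rintro (⟨rfl, rfl⟩ | ⟨rfl, rfl⟩ | ⟨rfl, heq⟩)
      · exact Or.inl ⟨rfl, (hts t).1⟩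
      · exact Or.inl ⟨rfl, (hts t).2⟩
      · rw [heq]
        by_cases hd : Dir j t
        · rw [if_pos hd]; exact Or.inr ⟨rfl, Or.inl ⟨rfl, hd⟩⟩
        · rw [if_neg hd]
          exact Or.inr ⟨rfl, Or.inr ⟨(sub_add_cancel j 1).symm, (dir_flip hk j t).mpr hd⟩⟩

private lemma deg3 (hk : 1 ≤ k) (v : ZMod (2*k) × Fin 3) :
    ((triangleNecklace k).neighborSet v).ncard = 3 := by
  obtain ⟨j, t⟩ := v
  obtain ⟨c, hc, hN⟩ := nbhd hk j t
  rw [hN, Set.ncard_eq_three]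
  refine ⟨_, _, _, ?_, ?_, ?_, rfl⟩
  · have : ∀ t : Fin 3, t + 1 ≠ t + 2 := by decide
    exact fun h => this t (congrArg Prod.snd h)
  · exact fun h => hc (congrArg Prod.fst h).symm
  · exact fun h => hc (congrArg Prod.fst h).symm

private lemma perc_iff (hk : 1 ≤ k) (S : Set (ZMod (2*k) × Fin 3)) :
    IsPercolating (triangleNecklace k) 3 S ↔ IsIndep (triangleNecklace k) Sᶜ := by
  haveI : NeZero (2*k) := ⟨by omega⟩
  constructor
  · rintro ⟨n, hn⟩
    intro u hu v hv huv hadj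
    have hvN : v ∈ (triangleNecklace k).neighborSet u := hadj
    have huN : u ∈ (triangleNecklace k).neighborSet v := hadj.symm
    have key : ∀ m, u ∉ (percStep (triangleNecklace k) 3)^[m] S ∧
        v ∉ (percStep (triangleNecklace k) 3)^[m] S := by
      intro m
      induction m with
      | zero => exact ⟨hu, hv⟩
      | succ m ih =>
        rw [Function.iterate_succ_apply']
        set B := (percStep (triangleNecklace k) 3)^[m] S with hB
        have hcard : ∀ w x : ZMod (2*k) × Fin 3,
            x ∈ (triangleNecklace k).neighborSet w → x ∉ B →
            ¬ 3 ≤ ((triangleNecklace k).neighborSet w ∩ B).ncard := by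
          intro w x hxw hxB hle
          have hsub : (triangleNecklace k).neighborSet w ∩ B ⊆
              (triangleNecklace k).neighborSet w \ {x} := by
            rintro y ⟨hy1, hy2⟩
            exact ⟨hy1, fun h => hxB (h ▸ hy2)⟩
          have h1 : ((triangleNecklace k).neighborSet w ∩ B).ncard ≤
              ((triangleNecklace k).neighborSet w \ {x}).ncard :=
            Set.ncard_le_ncard hsub (Set.toFinite _)
          have h2 : ((triangleNecklace k).neighborSet w \ {x}).ncard <
              ((triangleNecklace k).neighborSet w).ncard :=
            Set.ncard_diff_singleton_lt_of_mem hxw (Set.toFinite _)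
          rw [deg3 hk] at h2
          omega
        constructor <;> rintro (h | h)
        · exact ih.1 h
        · exact hcard u v hvN ih.2 h
        · exact ih.2 h
        · exact hcard v u huN ih.1 h
    exact (key n).1 (hn ▸ Set.mem_univ u)
  · intro hind
    refine ⟨1, ?_⟩
    rw [Function.iterate_one]
    ext w
    simp only [Set.mem_univ, iff_true, percStep, Set.mem_union, Set.mem_setOf_eq]
    by_cases hw : w ∈ S
    · exact Or.inl hw
    · right
      have hsub : (triangleNecklace k).neighborSet w ⊆ S := by
        intro x hx
        by_contra hxS
        exact hind hw hxS ((triangleNecklace k).ne_of_adj hx) hx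
      rw [Set.inter_eq_self_of_subset_left hsub, deg3 hk w]

private lemma indep_card_le (hk : 1 ≤ k) (I : Set (ZMod (2*k) × Fin 3))
    (h : IsIndep (triangleNecklace k) I) : I.ncard ≤ 2*k := by
  haveI : NeZero (2*k) := ⟨by omega⟩
  have hinj : Set.InjOn Prod.fst I := by
    intro u hu v hv hf
    by_contra hne
    refine h hu hv hne ?_
    obtain ⟨ju, tu⟩ := u; obtain ⟨jv, tv⟩ := v
    rw [adj_iff hk]
    exact Or.inl ⟨hf, fun hh => hne (by simp only [Prod.mk.injEq]; exact ⟨hf, hh⟩)⟩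
  calc I.ncard = (Prod.fst '' I).ncard := (Set.ncard_image_of_injOn hinj).symm
    _ ≤ (Set.univ : Set (ZMod (2*k))).ncard :=
        Set.ncard_le_ncard (Set.subset_univ _) (Set.toFinite _)
    _ = 2*k := by rw [Set.ncard_univ, Nat.card_eq_fintype_card, ZMod.card]

private def pick (j : ZMod (2*k)) : Fin 3 := if Even j.val then 2 else 0

private lemma pick_flip (hk : 1 ≤ k) (j : ZMod (2*k)) : pick (j+1) ≠ pick j := by
  unfold pick
  by_cases he : Even j.val
  · rw [if_pos he, if_neg (fun h => (parity_flip hk j).mp h he)]; decide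
  · rw [if_neg he, if_pos ((parity_flip hk j).mpr he)]; decide

private lemma I0_spec (hk : 1 ≤ k) :
    ∃ I : Set (ZMod (2*k) × Fin 3), I.ncard = 2*k ∧ IsIndep (triangleNecklace k) I := by
  haveI : NeZero (2*k) := ⟨by omega⟩
  refine ⟨Set.range (fun j : ZMod (2*k) => (j, pick j)), ?_, ?_⟩
  · have hinj : Function.Injective (fun j : ZMod (2*k) => (j, pick j)) := by
      intro a b hab; exact congrArg Prod.fst hab
    rw [← Set.image_univ, Set.ncard_image_of_injective _ hinj, Set.ncard_univ,
      Nat.card_eq_fintype_card, ZMod.card]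
  · intro u hu v hv hne hadj
    obtain ⟨j, rfl⟩ := hu
    obtain ⟨j', rfl⟩ := hv
    simp only at hadj
    rw [adj_iff hk] at hadj
    have hjj : j ≠ j' := fun h => hne (by rw [h])
    rcases hadj with ⟨h1, _⟩ | ⟨h1, ⟨h2, _⟩ | ⟨h2, _⟩⟩
    · exact hjj h1
    · exact pick_flip hk j (h2 ▸ h1.symm)
    · exact pick_flip hk j' (h2 ▸ h1)

end Aux

theorem stmt19 (k : ℕ) (hk : 1 ≤ k) :
    indepNumber (triangleNecklace k) = 2 * k ∧
    percNumber (triangleNecklace k) 3 = 4 * k := by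
  haveI : NeZero (2*k) := ⟨by omega⟩
  obtain ⟨I0, hI0card, hI0ind⟩ := I0_spec hk
  have hcardV : Nat.card (ZMod (2*k) × Fin 3) = 6*k := by
    rw [Nat.card_eq_fintype_card, Fintype.card_prod, ZMod.card, Fintype.card_fin]
    ring
  constructor
  · apply le_antisymm
    · refine csSup_le ⟨2*k, I0, hI0card, hI0ind⟩ ?_
      rintro m ⟨I, rfl, hI⟩
      exact indep_card_le hk I hI
    · exact le_csSup ⟨2*k, by rintro m ⟨I, rfl, hI⟩; exact indep_card_le hk I hI⟩
        ⟨I0, hI0card, hI0ind⟩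
  · have hmem : 4*k ∈ {m | ∃ S : Set (ZMod (2*k) × Fin 3),
        S.ncard = m ∧ IsPercolating (triangleNecklace k) 3 S} := by
      refine ⟨I0ᶜ, ?_, (perc_iff hk _).mpr (by rwa [compl_compl])⟩
      have h2 := Set.ncard_add_ncard_compl I0
      rw [hI0card, hcardV] at h2
      omega
    apply le_antisymm
    · exact Nat.sInf_le hmem
    · apply le_csInf ⟨_, hmem⟩
      rintro m ⟨S, rfl, hS⟩
      have h1 := indep_card_le hk Sᶜ ((perc_iff hk S).mp hS)
      have h2 := Set.ncard_add_ncard_compl S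
      rw [hcardV] at h2
      omega
end
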